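/- Let n ≥ 2 and let φ_λ : ℝⁿ × ℝ → ℝⁿ, λ ∈ [0,1], be a coercive family of dissipative flows, K_0 the global attractor of φ_0, and (K_λ)_{λ∈[0,λ₁]} a continuation of K_0 with each K_λ (λ > 0) an attractor of φ_λ. For small λ > 0 set C_λ = ℝⁿ ∖ (A_λ(K_λ) ∪ R_λ), where R_λ = {x : ‖φ_λ(x,t)‖ → ∞ as t → −∞}. Then diam(C_λ) → ∞ as λ → 0⁺; more precisely, for every L > 0 there exists λ₀ > 0 such that diam(C_λ) > L for all 0 < λ < λ₀. -/

import Mathlib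

open Set Metric Filter Topology Bornology

section Defs

variable {M : Type*} [TopologicalSpace M]

/-- A (continuous) flow on a topological space. -/
def IsFlow (φ : M → ℝ → M) : Prop :=
  Continuous (fun p : M × ℝ => φ p.1 p.2) ∧
    (∀ x, φ x 0 = x) ∧ ∀ x s t, φ (φ x s) t = φ x (s + t)

/-- A set `S` is invariant for the flow `φ` if `φ(S,t) = S` for every `t`. -/
def FlowInvariant (φ : M → ℝ → M) (S : Set M) : Prop :=
  ∀ t : ℝ, (fun x => φ x t) '' S = S

/-- The omega-limit set `ω(x) = ⋂_{t>0} cl (φ(x,[t,∞)))`. -/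
def omegaLimitSet (φ : M → ℝ → M) (x : M) : Set M :=
  ⋂ t ∈ Ioi (0 : ℝ), closure (φ x '' Ici t)

/-- The negative omega-limit set `ω*(x) = ⋂_{t<0} cl (φ(x,(-∞,t]))`. -/
def negOmegaLimitSet (φ : M → ℝ → M) (x : M) : Set M :=
  ⋂ t ∈ Iio (0 : ℝ), closure (φ x '' Iic t)

/-- A flow is dissipative if every omega-limit set is nonempty and the closure of the
union of all omega-limit sets is compact. -/
def Dissipative (φ : M → ℝ → M) : Prop :=
  (∀ x, (omegaLimitSet φ x).Nonempty) ∧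
    IsCompact (closure (⋃ x, omegaLimitSet φ x))

/-- `K` is stable: every neighborhood `U` of `K` contains a neighborhood `V` of `K`
with `φ(V,[0,∞)) ⊆ U`. -/
def FlowStable (φ : M → ℝ → M) (K : Set M) : Prop :=
  ∀ U ∈ nhdsSet K, ∃ V ∈ nhdsSet K, ∀ x ∈ V, ∀ t : ℝ, 0 ≤ t → φ x t ∈ U

/-- `K` is negatively stable: every neighborhood `U` of `K` contains a neighborhood `V`
of `K` with `φ(V,(-∞,0]) ⊆ U`. -/
def FlowNegStable (φ : M → ℝ → M) (K : Set M) : Prop :=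
  ∀ U ∈ nhdsSet K, ∃ V ∈ nhdsSet K, ∀ x ∈ V, ∀ t : ℝ, t ≤ 0 → φ x t ∈ U

/-- The region of attraction `A(K) = {x : ∅ ≠ ω(x) ⊆ K}`. -/
def attractionRegion (φ : M → ℝ → M) (K : Set M) : Set M :=
  {x | (omegaLimitSet φ x).Nonempty ∧ omegaLimitSet φ x ⊆ K}

/-- The region of repulsion `R(K) = {x : ∅ ≠ ω*(x) ⊆ K}`. -/
def repulsionRegion (φ : M → ℝ → M) (K : Set M) : Set M :=
  {x | (negOmegaLimitSet φ x).Nonempty ∧ negOmegaLimitSet φ x ⊆ K}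

/-- An attractor: a compact invariant stable set which is attracting, i.e. its region of
attraction is a neighborhood of it. -/
def IsAttractor (φ : M → ℝ → M) (K : Set M) : Prop :=
  IsCompact K ∧ FlowInvariant φ K ∧ FlowStable φ K ∧
    attractionRegion φ K ∈ nhdsSet K

/-- A repeller: a compact invariant negatively stable set which is repelling. -/
def IsRepeller (φ : M → ℝ → M) (K : Set M) : Prop :=
  IsCompact K ∧ FlowInvariant φ K ∧ FlowNegStable φ K ∧
    repulsionRegion φ K ∈ nhdsSet K

/-- A global attractor: a compact invariant stable set whose region of attraction is the
whole space. -/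
def IsGlobalAttractor (φ : M → ℝ → M) (K : Set M) : Prop :=
  IsCompact K ∧ FlowInvariant φ K ∧ FlowStable φ K ∧
    attractionRegion φ K = univ

/-- `N` is an isolating neighborhood of `K`: a compact neighborhood of `K` such that `K`
is the maximal invariant set contained in `N`. -/
def IsIsolatingNbhd (φ : M → ℝ → M) (N K : Set M) : Prop :=
  IsCompact N ∧ K ⊆ interior N ∧ FlowInvariant φ K ∧
    ∀ S : Set M, FlowInvariant φ S → S ⊆ N → S ⊆ K

/-- An isolated invariant set: a compact invariant set having an isolating neighborhood. -/
def IsIsolatedInvariant (φ : M → ℝ → M) (K : Set M) : Prop :=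
  IsCompact K ∧ FlowInvariant φ K ∧ ∃ N, IsIsolatingNbhd φ N K

/-- A parametrized family of flows `(φ_λ)_{λ ∈ [0,1]}`: jointly continuous on
`[0,1] × M × ℝ` and each `φ_λ` is a flow. -/
def IsParamFlow (φ : ℝ → M → ℝ → M) : Prop :=
  ContinuousOn (fun p : ℝ × M × ℝ => φ p.1 p.2.1 p.2.2)
      ((Icc 0 1 : Set ℝ) ×ˢ (univ : Set (M × ℝ))) ∧
    ∀ l ∈ Icc (0 : ℝ) 1, IsFlow (φ l)

/-- `(K_λ)_{λ ∈ J}` is a continuation: each `K_λ` is an isolated invariant set of `φ_λ`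
and every isolating neighborhood of `K_{λ₀}` remains an isolating neighborhood of `K_λ`
for `λ` near `λ₀` in `J`. -/
def IsContinuation (φ : ℝ → M → ℝ → M) (J : Set ℝ) (K : ℝ → Set M) : Prop :=
  (∀ l ∈ J, IsIsolatedInvariant (φ l) (K l)) ∧
    ∀ l₀ ∈ J, ∀ N : Set M, IsIsolatingNbhd (φ l₀) N (K l₀) →
      ∃ δ > 0, ∀ l ∈ J, |l - l₀| < δ → IsIsolatingNbhd (φ l) N (K l)

/-- The family `(φ_λ)` is uniformly dissipative. -/
def UniformlyDissipative (φ : ℝ → M → ℝ → M) : Prop :=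
  (∀ l ∈ Icc (0 : ℝ) 1, ∀ x, (omegaLimitSet (φ l) x).Nonempty) ∧
    IsCompact (closure (⋃ l ∈ Icc (0 : ℝ) 1, ⋃ x, omegaLimitSet (φ l) x))

end Defs

section NormedDefs

variable {E : Type*} [NormedAddCommGroup E]

/-- A coercive family of dissipative flows: for every continuation of the global
attractor of `φ₀`, the regions of attraction are bounded for all small `λ > 0`. -/
def CoerciveFamily (φ : ℝ → E → ℝ → E) : Prop :=
  ∀ lam1 ∈ Ioc (0 : ℝ) 1, ∀ K : ℝ → Set E,
    IsContinuation φ (Icc 0 lam1) K → IsGlobalAttractor (φ 0) (K 0) →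
      ∃ lam0, 0 < lam0 ∧ lam0 ≤ lam1 ∧ ∀ l, 0 < l → l < lam0 →
        IsBounded (attractionRegion (φ l) (K l))

/-- A polar family of dissipative flows: it has arbitrarily large bounded trajectories. -/
def PolarFamily (φ : ℝ → E → ℝ → E) : Prop :=
  ∀ L > 0, ∃ lam0 > 0, ∀ l, 0 < l → l < lam0 → l ≤ 1 →
    ∃ x : E, IsBounded (range (φ l x)) ∧
      ∃ tl < (0 : ℝ), ∀ t < tl, L < ‖φ l x t‖

/-- The set of points whose trajectory tends to infinity in negative time
(the region of repulsion of the point at infinity). -/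
def escapeRegion (φ : ℝ → E → ℝ → E) (l : ℝ) : Set E :=
  {x | Tendsto (fun t => ‖φ l x t‖) atBot atTop}

/-- The complementary isolated invariant set
`C_λ = ℝⁿ ∖ (A_λ(K_λ) ∪ R_λ(∞))`. -/
def complementarySet (φ : ℝ → E → ℝ → E) (K : ℝ → Set E) (l : ℝ) : Set E :=
  (attractionRegion (φ l) (K l) ∪ escapeRegion φ l)ᶜ

end NormedDefs

set_option linter.unusedSectionVars false
set_option linter.unusedVariables false

section Aux
variable {X : Type*} [MetricSpace X] {ψ : X → ℝ → X}

lemma flow_contx (hc : Continuous fun p : X × ℝ => ψ p.1 p.2) (t : ℝ) :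
    Continuous fun x => ψ x t :=
  hc.comp (continuous_id.prodMk continuous_const)

lemma omega_subset_tail {x : X} {t : ℝ} :
    omegaLimitSet ψ x ⊆ closure (ψ x '' Ici t) := by
  intro z hz
  have h1 : z ∈ closure (ψ x '' Ici (max t 1)) :=
    mem_iInter₂.1 hz (max t 1) (mem_Ioi.2 (lt_max_iff.2 (Or.inr one_pos)))
  exact closure_mono (image_mono (Ici_subset_Ici.2 (le_max_left _ _))) h1

lemma mem_omega_of {x z : X} (h : ∀ t : ℝ, z ∈ closure (ψ x '' Ici t)) :
    z ∈ omegaLimitSet ψ x :=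
  mem_iInter₂.2 fun t _ => h t

lemma maps_omega (hc : Continuous fun p : X × ℝ => ψ p.1 p.2)
    (ha : ∀ x s t, ψ (ψ x s) t = ψ x (s + t)) {x z : X} (τ : ℝ)
    (hz : z ∈ omegaLimitSet ψ x) : ψ z τ ∈ omegaLimitSet ψ x := by
  refine mem_omega_of fun t => ?_
  have h1 : z ∈ closure (ψ x '' Ici (t - τ)) := omega_subset_tail hz
  have h3 := image_closure_subset_closure_image (flow_contx hc τ) (mem_image_of_mem _ h1)
  refine closure_mono ?_ h3
  rintro _ ⟨_, ⟨u, hu, rfl⟩, rfl⟩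
  exact ⟨u + τ, by simp only [mem_Ici] at hu ⊢; linarith, (ha x u τ).symm⟩

lemma flowInvariant_of_mapsTo (h0 : ∀ x, ψ x 0 = x)
    (ha : ∀ x s t, ψ (ψ x s) t = ψ x (s + t)) {S : Set X}
    (h : ∀ s : ℝ, ∀ x ∈ S, ψ x s ∈ S) : FlowInvariant ψ S := by
  intro t
  apply subset_antisymm
  · rintro _ ⟨x, hx, rfl⟩; exact h t x hx
  · intro x hx
    exact ⟨ψ x (-t), h (-t) x hx, by show ψ (ψ x (-t)) t = x; rw [ha, neg_add_cancel, h0]⟩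

lemma mem_of_flowInvariant {S : Set X} (h : FlowInvariant ψ S) {x : X}
    (hx : x ∈ S) (t : ℝ) : ψ x t ∈ S := by
  have := h t
  rw [← this]
  exact mem_image_of_mem _ hx

lemma omega_flowInvariant (hc : Continuous fun p : X × ℝ => ψ p.1 p.2)
    (h0 : ∀ x, ψ x 0 = x) (ha : ∀ x s t, ψ (ψ x s) t = ψ x (s + t)) (x : X) :
    FlowInvariant ψ (omegaLimitSet ψ x) :=
  flowInvariant_of_mapsTo h0 ha fun s _ hz => maps_omega hc ha s hz

lemma closure_flowInvariant (hc : Continuous fun p : X × ℝ => ψ p.1 p.2)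
    (h0 : ∀ x, ψ x 0 = x) (ha : ∀ x s t, ψ (ψ x s) t = ψ x (s + t)) {S : Set X}
    (h : FlowInvariant ψ S) : FlowInvariant ψ (closure S) := by
  refine flowInvariant_of_mapsTo h0 ha fun s x hx => ?_
  have h3 := image_closure_subset_closure_image (flow_contx hc s) (mem_image_of_mem _ hx)
  rwa [h s] at h3

lemma omega_shift (h0 : ∀ x, ψ x 0 = x)
    (ha : ∀ x s t, ψ (ψ x s) t = ψ x (s + t)) (x : X) (s : ℝ) :
    omegaLimitSet ψ (ψ x s) = omegaLimitSet ψ x := by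
  have key : ∀ t : ℝ, ψ (ψ x s) '' Ici t = ψ x '' Ici (s + t) := by
    intro t; ext y; constructor
    · rintro ⟨u, hu, rfl⟩
      exact ⟨s + u, by simp only [mem_Ici] at hu ⊢; linarith, (ha x s u).symm⟩
    · rintro ⟨v, hv, rfl⟩
      refine ⟨v - s, by simp only [mem_Ici] at hv ⊢; linarith, ?_⟩
      rw [ha]; congr 1; ring
  apply subset_antisymm
  · intro z hz
    refine mem_omega_of fun t => ?_
    have h1 : z ∈ closure (ψ (ψ x s) '' Ici (t - s)) := omega_subset_tail hz
    rwa [key, show s + (t - s) = t by ring] at h1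
  · intro z hz
    refine mem_omega_of fun t => ?_
    have h1 : z ∈ closure (ψ x '' Ici (s + t)) := omega_subset_tail hz
    rwa [← key] at h1

lemma attraction_invariant (h0 : ∀ x, ψ x 0 = x)
    (ha : ∀ x s t, ψ (ψ x s) t = ψ x (s + t)) (K : Set X) :
    FlowInvariant ψ (attractionRegion ψ K) := by
  refine flowInvariant_of_mapsTo h0 ha fun s x hx => ?_
  obtain ⟨hne, hsub⟩ := hx
  exact ⟨by rwa [omega_shift h0 ha], by rwa [omega_shift h0 ha]⟩

lemma omega_nonempty_of_tail {C : Set X} (hC : IsCompact C) {x : X} {s : ℝ}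
    (h : ∀ t, s ≤ t → ψ x t ∈ C) :
    (omegaLimitSet ψ x).Nonempty ∧ omegaLimitSet ψ x ⊆ C := by
  have tailC : ∀ u, s ≤ u → ψ x '' Ici u ⊆ C := by
    rintro u hu _ ⟨v, hv, rfl⟩; exact h v (hu.trans hv)
  have hsub : omegaLimitSet ψ x ⊆ C :=
    omega_subset_tail.trans (closure_minimal (tailC s le_rfl) hC.isClosed)
  refine ⟨?_, hsub⟩
  set D : ℝ → Set X := fun t => closure (ψ x '' Ici (max t s)) with hD
  have hDC : ∀ t, D t ⊆ C := fun t =>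
    closure_minimal (tailC _ (le_max_right _ _)) hC.isClosed
  have hDcpt : ∀ t, IsCompact (D t) := fun t =>
    hC.of_isClosed_subset isClosed_closure (hDC t)
  have hDne : ∀ t, (D t).Nonempty :=
    fun t => ⟨ψ x (max t s), subset_closure (mem_image_of_mem _ (mem_Ici.2 le_rfl))⟩
  have hmono : ∀ {a b : ℝ}, a ≤ b → D b ⊆ D a := fun {a b} hab =>
    closure_mono (image_mono (Ici_subset_Ici.2 (max_le_max hab le_rfl)))
  have hdir : Directed (fun x1 x2 => x1 ⊇ x2) D := fun a b =>
    ⟨max a b, hmono (le_max_left _ _), hmono (le_max_right _ _)⟩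
  obtain ⟨z, hz⟩ :=
    IsCompact.nonempty_iInter_of_directed_nonempty_isCompact_isClosed D hdir hDne hDcpt
      (fun t => isClosed_closure)
  refine ⟨z, mem_omega_of fun t => ?_⟩
  exact closure_mono (image_mono (Ici_subset_Ici.2 (le_max_left _ _))) (mem_iInter.1 hz t)

lemma orbit_meets {x : X} {O : Set X} (h1 : (omegaLimitSet ψ x).Nonempty)
    (h2 : omegaLimitSet ψ x ⊆ O) (hO : IsOpen O) (t₀ : ℝ) :
    ∃ s, t₀ ≤ s ∧ ψ x s ∈ O := by
  by_contra hcon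
  push_neg at hcon
  have htail : ψ x '' Ici t₀ ⊆ Oᶜ := by
    rintro _ ⟨u, hu, rfl⟩; exact hcon u hu
  obtain ⟨z, hz⟩ := h1
  have hzO : z ∈ O := h2 hz
  have : z ∈ Oᶜ :=
    closure_minimal htail (hO.isClosed_compl) (omega_subset_tail hz)
  exact this hzO

lemma uniform_enter (hc : Continuous fun p : X × ℝ => ψ p.1 p.2) {S O : Set X}
    (hS : IsCompact S) (hO : IsOpen O)
    (hen : ∀ x ∈ S, ∃ s, 0 ≤ s ∧ ψ x s ∈ O) :
    ∃ T, 0 ≤ T ∧ ∀ x ∈ S, ∃ s, 0 ≤ s ∧ s ≤ T ∧ ψ x s ∈ O := by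
  classical
  set U : ℝ → Set X := fun s => if 0 ≤ s then (fun y => ψ y s) ⁻¹' O else ∅ with hU
  have hUopen : ∀ s, IsOpen (U s) := by
    intro s
    by_cases h : 0 ≤ s
    · simpa [hU, h] using hO.preimage (flow_contx hc s)
    · simp [hU, h]
  have hcov : S ⊆ ⋃ s, U s := by
    intro x hx
    obtain ⟨s, hs0, hsO⟩ := hen x hx
    exact mem_iUnion.2 ⟨s, by simp [hU, hs0, hsO]⟩
  obtain ⟨F, hF⟩ := hS.elim_finite_subcover U hUopen hcov
  obtain ⟨T, hT⟩ := F.bddAbove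
  refine ⟨max T 0, le_max_right _ _, fun x hx => ?_⟩
  obtain ⟨s, hsF, hsU⟩ := mem_iUnion₂.1 (hF hx)
  by_cases h : 0 ≤ s
  · rw [hU] at hsU
    simp only [if_pos h] at hsU
    exact ⟨s, h, (hT hsF).trans (le_max_left _ _), hsU⟩
  · rw [hU] at hsU
    simp only [if_neg h] at hsU
    exact absurd hsU (notMem_empty _)

section Aux2
variable {X : Type*} [MetricSpace X] {ψ : X → ℝ → X}


lemma subset_attractor_of_compact_invariant
    (hc : Continuous fun p : X × ℝ => ψ p.1 p.2) (h0 : ∀ x, ψ x 0 = x)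
    (ha : ∀ x s t, ψ (ψ x s) t = ψ x (s + t)) {K : Set X}
    (hstab : FlowStable ψ K)
    (huniv : ∀ x : X, (omegaLimitSet ψ x).Nonempty ∧ omegaLimitSet ψ x ⊆ K)
    {S : Set X} (hSinv : FlowInvariant ψ S) (hScpt : IsCompact S) : S ⊆ K := by
  intro x hx
  have main : ∀ U : Set X, IsOpen U → K ⊆ U → x ∈ U := by
    intro U hUo hKU
    obtain ⟨V, hV, hstay⟩ := hstab U (hUo.mem_nhdsSet.2 hKU)
    have hKV : K ⊆ interior V := subset_interior_iff_mem_nhdsSet.2 hV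
    have hen : ∀ y ∈ S, ∃ s, 0 ≤ s ∧ ψ y s ∈ interior V := fun y _ =>
      orbit_meets (huniv y).1 ((huniv y).2.trans hKV) isOpen_interior 0
    obtain ⟨T, hT0, hTen⟩ := uniform_enter hc hScpt isOpen_interior hen
    have hy : ψ x (-T) ∈ S := mem_of_flowInvariant hSinv hx (-T)
    obtain ⟨s, hs0, hsT, hsV⟩ := hTen _ hy
    have hst := hstay _ (interior_subset hsV) (T - s) (by linarith)
    rw [ha, show s + (T - s) = T by ring, ha, show -T + T = 0 by ring, h0] at hst
    exact hst
  by_contra hxK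
  exact main {x}ᶜ isClosed_singleton.isOpen_compl
    (fun y hy h => hxK (by rw [mem_singleton_iff] at h; exact h ▸ hy)) rfl

lemma isolating_of_compact_nbhd
    (hc : Continuous fun p : X × ℝ => ψ p.1 p.2) (h0 : ∀ x, ψ x 0 = x)
    (ha : ∀ x s t, ψ (ψ x s) t = ψ x (s + t)) {K : Set X}
    (hstab : FlowStable ψ K)
    (huniv : ∀ x : X, (omegaLimitSet ψ x).Nonempty ∧ omegaLimitSet ψ x ⊆ K)
    (hKinv : FlowInvariant ψ K) {N : Set X} (hN : IsCompact N)
    (hKN : K ⊆ interior N) : IsIsolatingNbhd ψ N K := by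
  refine ⟨hN, hKN, hKinv, fun S hSinv hSN => ?_⟩
  have h1 : closure S ⊆ N := closure_minimal hSN hN.isClosed
  have h2 : IsCompact (closure S) := hN.of_isClosed_subset isClosed_closure h1
  have h3 : FlowInvariant ψ (closure S) := closure_flowInvariant hc h0 ha hSinv
  exact subset_closure.trans
    (subset_attractor_of_compact_invariant hc h0 ha hstab huniv h3 h2)

lemma attraction_open [ProperSpace X]
    (hc : Continuous fun p : X × ℝ => ψ p.1 p.2) (h0 : ∀ x, ψ x 0 = x)
    (ha : ∀ x s t, ψ (ψ x s) t = ψ x (s + t)) {K N : Set X}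
    (hKcpt : IsCompact K) (hstab : FlowStable ψ K)
    (hiso : IsIsolatingNbhd ψ N K) : IsOpen (attractionRegion ψ K) := by
  obtain ⟨hNc, hKN, hKinv, hNmax⟩ := hiso
  obtain ⟨ε, hε, hεN⟩ := hKcpt.exists_cthickening_subset_open isOpen_interior hKN
  set U₀ := thickening ε K with hU₀
  have hU₀o : IsOpen U₀ := isOpen_thickening
  have hU₀K : K ⊆ U₀ := self_subset_thickening hε K
  have hclU₀ : closure U₀ ⊆ N :=
    ((closure_thickening_subset_cthickening ε K).trans hεN).trans interior_subset
  have hclU₀c : IsCompact (closure U₀) := hNc.of_isClosed_subset isClosed_closure hclU₀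
  obtain ⟨V, hV, hstay⟩ := hstab U₀ (hU₀o.mem_nhdsSet.2 hU₀K)
  rw [isOpen_iff_mem_nhds]
  rintro x ⟨hxne, hxK⟩
  obtain ⟨s, hs0, hsV⟩ :=
    orbit_meets hxne (hxK.trans (subset_interior_iff_mem_nhdsSet.2 hV)) isOpen_interior 0
  refine Filter.mem_of_superset
    ((isOpen_interior.preimage (flow_contx hc s)).mem_nhds hsV) ?_
  intro y hy
  have htail : ∀ t, s ≤ t → ψ y t ∈ closure U₀ := by
    intro t ht
    have h1 := hstay _ (interior_subset hy) (t - s) (by linarith)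
    rw [ha, show s + (t - s) = t by ring] at h1
    exact subset_closure h1
  obtain ⟨hne, hsub⟩ := omega_nonempty_of_tail hclU₀c htail
  exact ⟨hne, hNmax _ (omega_flowInvariant hc h0 ha y) (hsub.trans hclU₀)⟩

lemma forward_trap (h0 : ∀ x, ψ x 0 = x)
    (ha : ∀ x s t, ψ (ψ x s) t = ψ x (s + t)) {P V' : Set X} (hVP : V' ⊆ P)
    {T₁ : ℝ} (hT₁ : 0 < T₁)
    (hstep : ∀ x ∈ P, ∀ t, T₁ ≤ t → t ≤ 2*T₁ → ψ x t ∈ V') :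
    ∀ x ∈ P, ∀ t, T₁ ≤ t → ψ x t ∈ V' := by
  have key : ∀ k : ℕ, ∀ x ∈ P, ∀ t, T₁ ≤ t → t ≤ 2*T₁ + k*T₁ → ψ x t ∈ V' := by
    intro k
    induction k with
    | zero => exact fun x hx t h1 h2 => hstep x hx t h1 (by push_cast at h2; linarith)
    | succ k ih =>
      intro x hx t h1 h2
      by_cases hle : t ≤ 2*T₁ + k*T₁
      · exact ih x hx t h1 hle
      · push_neg at hle
        have hk : (0:ℝ) ≤ k*T₁ := mul_nonneg (Nat.cast_nonneg k) hT₁.le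
        have h3 : T₁ ≤ t - T₁ := by linarith
        have h4 : t - T₁ ≤ 2*T₁ + k*T₁ := by push_cast at h2; linarith
        have hy := ih x hx (t - T₁) h3 h4
        have h5 := hstep _ (hVP hy) T₁ le_rfl (by linarith)
        rwa [ha, show (t - T₁) + T₁ = t by ring] at h5
  intro x hx t ht
  obtain ⟨k, hk⟩ := exists_nat_ge ((t - 2*T₁)/T₁)
  rw [div_le_iff₀ hT₁] at hk
  exact key k x hx t ht (by linarith)

end Aux2

section Aux3
variable {X : Type*} [MetricSpace X]


lemma param_uniform {φ : ℝ → X → ℝ → X} (hφ : IsParamFlow φ) {Q : Set X}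
    (hQ : IsCompact Q) {T ε : ℝ} (hT : 0 ≤ T) (hε : 0 < ε) :
    ∃ δ > 0, ∀ l ∈ Icc (0:ℝ) 1, l < δ → ∀ x ∈ Q, ∀ t ∈ Icc (0:ℝ) T,
      dist (φ l x t) (φ 0 x t) < ε := by
  have h0flow := hφ.2 0 ⟨le_refl 0, zero_le_one⟩
  set D : Set (ℝ × X × ℝ) := Icc (0:ℝ) 1 ×ˢ Q ×ˢ Icc 0 T with hDdef
  have hDc : IsCompact D := isCompact_Icc.prod (hQ.prod isCompact_Icc)
  have hDcl : IsClosed D := isClosed_Icc.prod (hQ.isClosed.prod isClosed_Icc)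
  set g : ℝ × X × ℝ → ℝ := fun p => dist (φ p.1 p.2.1 p.2.2) (φ 0 p.2.1 p.2.2) with hgdef
  have hg : ContinuousOn g D := by
    have h1 : ContinuousOn (fun p : ℝ × X × ℝ => φ p.1 p.2.1 p.2.2) D :=
      hφ.1.mono (fun p hp => ⟨hp.1, mem_univ _⟩)
    have h2 : Continuous (fun p : ℝ × X × ℝ => φ 0 p.2.1 p.2.2) :=
      h0flow.1.comp continuous_snd
    exact continuous_dist.comp_continuousOn (h1.prodMk h2.continuousOn)
  set A := D ∩ g ⁻¹' (Ici ε) with hAdef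
  have hAcl : IsClosed A := hg.preimage_isClosed_of_isClosed hDcl isClosed_Ici
  have hAc : IsCompact A := hDc.of_isClosed_subset hAcl inter_subset_left
  have hπ : IsCompact (Prod.fst '' A) := hAc.image continuous_fst
  have h0π : (0:ℝ) ∉ Prod.fst '' A := by
    rintro ⟨⟨l, x, t⟩, ⟨hD, hge⟩, hfst⟩
    simp only at hfst
    subst hfst
    simp only [mem_preimage, mem_Ici, hgdef, dist_self] at hge
    exact absurd hge (not_le.2 hε)
  have hopen : (Prod.fst '' A)ᶜ ∈ 𝓝 (0:ℝ) := hπ.isClosed.isOpen_compl.mem_nhds h0π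
  obtain ⟨δ, hδ, hball⟩ := Metric.mem_nhds_iff.1 hopen
  refine ⟨δ, hδ, fun l hl hlδ x hx t ht => ?_⟩
  by_contra hcon
  push_neg at hcon
  have hmem : (l, x, t) ∈ A := ⟨⟨hl, hx, ht⟩, hcon⟩
  have : l ∈ Prod.fst '' A := ⟨_, hmem, rfl⟩
  exact hball (by simpa [Real.dist_eq, abs_of_nonneg hl.1] using hlδ) this

end Aux3

section Ray
variable {E : Type*} [NormedAddCommGroup E] [NormedSpace ℝ E]

lemma ray_hits {A R : Set E} (hAo : IsOpen A) (hAb : IsBounded A)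
    (h0A : (0:E) ∈ A) (hRA : ∀ x ∈ closure A, x ∉ R) {e : E} (he : ‖e‖ = 1)
    (hcov : ∀ t : ℝ, 0 ≤ t → t • e ∈ A ∪ R) : False := by
  set S := {t : ℝ | 0 ≤ t ∧ t • e ∈ closure A} with hSdef
  have hne : S.Nonempty := ⟨0, le_rfl, by simpa using subset_closure h0A⟩
  obtain ⟨M, hM⟩ := hAb.closure.subset_closedBall 0
  have hbdd : BddAbove S := by
    refine ⟨max M 0, fun t ht => ?_⟩
    obtain ⟨ht0, htA⟩ := ht
    have h1 : ‖t • e‖ ≤ M := by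
      have := hM htA
      rwa [← mem_closedBall_zero_iff]
    rw [norm_smul, he, mul_one, Real.norm_of_nonneg ht0] at h1
    exact h1.trans (le_max_left _ _)
  have hScl : IsClosed S := by
    have : S = Ici 0 ∩ (fun t : ℝ => t • e) ⁻¹' closure A := by
      ext t; simp [hSdef, mem_Ici]
    rw [this]
    exact isClosed_Ici.inter
      (isClosed_closure.preimage (continuous_id.smul continuous_const))
  set t₀ := sSup S with ht₀def
  have ht₀ : t₀ ∈ S := hScl.csSup_mem hne hbdd
  have ht₀A : t₀ • e ∈ A := by
    rcases hcov t₀ ht₀.1 with h | h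
    · exact h
    · exact absurd h (hRA _ ht₀.2)
  have hco : ContinuousAt (fun t : ℝ => t • e) t₀ :=
    (continuous_id.smul continuous_const).continuousAt
  have hprev : {t : ℝ | t • e ∈ A} ∈ 𝓝 t₀ := hco.preimage_mem_nhds (hAo.mem_nhds ht₀A)
  obtain ⟨η, hη, hball⟩ := Metric.mem_nhds_iff.1 hprev
  have hmem : t₀ + η/2 ∈ S := by
    refine ⟨by linarith [ht₀.1], subset_closure (hball ?_)⟩
    have : dist (t₀ + η/2) t₀ < η := by
      rw [Real.dist_eq, show t₀ + η/2 - t₀ = η/2 by ring,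
        abs_of_nonneg (by linarith : (0:ℝ) ≤ η/2)]
      linarith
    exact this
  have := le_csSup hbdd hmem
  linarith

end Ray

/-- In the setting of a coercive family of dissipative flows on `ℝⁿ`
(`n ≥ 2`), the diameter of `C_λ = ℝⁿ ∖ (A_λ(K_λ) ∪ R_λ)` tends to infinity as
`λ → 0⁺`: for every `L > 0` there is `λ₀ > 0` with `diam C_λ > L` for all
`0 < λ < λ₀`. -/
theorem coercive_complementarySet_diam_tendsto_infty {n : ℕ} (hn : 2 ≤ n)
    (φ : ℝ → EuclideanSpace ℝ (Fin n) → ℝ → EuclideanSpace ℝ (Fin n))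
    (hφ : IsParamFlow φ)
    (hdiss : ∀ l ∈ Icc (0 : ℝ) 1, Dissipative (φ l))
    (hcoer : CoerciveFamily φ)
    (lam1 : ℝ) (hlam1 : lam1 ∈ Ioc (0 : ℝ) 1)
    (K : ℝ → Set (EuclideanSpace ℝ (Fin n)))
    (hcont : IsContinuation φ (Icc 0 lam1) K)
    (hK0 : IsGlobalAttractor (φ 0) (K 0))
    (hattr : ∀ l ∈ Ioc (0 : ℝ) lam1, IsAttractor (φ l) (K l)) :
    ∀ L > 0, ∃ lam0, 0 < lam0 ∧ lam0 ≤ lam1 ∧ ∀ l, 0 < l → l < lam0 →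
      ENNReal.ofReal L < EMetric.diam (complementarySet φ K l) := by
  classical
  intro L hL
  obtain ⟨hlam1pos, hlam1le⟩ := hlam1
  have h0mem : (0:ℝ) ∈ Icc (0:ℝ) 1 := ⟨le_refl _, zero_le_one⟩
  obtain ⟨hc0, h00, ha0⟩ := hφ.2 0 h0mem
  have hK0cpt := hK0.1
  have hK0inv := hK0.2.1
  have hK0stab := hK0.2.2.1
  have hK0univ := hK0.2.2.2
  have huniv0 : ∀ x, (omegaLimitSet (φ 0) x).Nonempty ∧ omegaLimitSet (φ 0) x ⊆ K 0 :=
    fun x => Set.eq_univ_iff_forall.mp hK0univ x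
  -- coercivity: region of attraction is bounded for small positive parameters
  obtain ⟨μ, hμpos, hμle, hμbd⟩ := hcoer lam1 ⟨hlam1pos, hlam1le⟩ K hcont hK0
  -- a big compact isolating neighborhood of the global attractor
  set N : Set (EuclideanSpace ℝ (Fin n)) := cthickening 1 (K 0) with hNdef
  have hNc : IsCompact N :=
    isCompact_of_isClosed_isBounded isClosed_cthickening hK0cpt.isBounded.cthickening
  have hKN : K 0 ⊆ interior N :=
    (self_subset_thickening one_pos _).trans
      (interior_maximal (thickening_subset_cthickening _ _) isOpen_thickening)
  have hNiso : IsIsolatingNbhd (φ 0) N (K 0) :=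
    isolating_of_compact_nbhd hc0 h00 ha0 hK0stab huniv0 hK0inv hNc hKN
  obtain ⟨δN, hδN, hδNiso⟩ := hcont.2 0 ⟨le_refl _, hlam1pos.le⟩ N hNiso
  -- a robust trapping region P inside N
  obtain ⟨ε₁, hε₁, hε₁N⟩ := hK0cpt.exists_cthickening_subset_open isOpen_interior hKN
  set U₁ := thickening ε₁ (K 0) with hU₁def
  have hU₁o : IsOpen U₁ := isOpen_thickening
  have hKU₁ : K 0 ⊆ U₁ := self_subset_thickening hε₁ _
  have hclU₁N : closure U₁ ⊆ interior N :=
    (closure_thickening_subset_cthickening _ _).trans hε₁N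
  obtain ⟨V, hVmem, hVstay⟩ := hK0stab U₁ (hU₁o.mem_nhdsSet.2 hKU₁)
  have hKiV : K 0 ⊆ interior V := subset_interior_iff_mem_nhdsSet.2 hVmem
  obtain ⟨ε₂, hε₂, hε₂V⟩ := hK0cpt.exists_cthickening_subset_open isOpen_interior hKiV
  set V' := thickening ε₂ (K 0) with hV'def
  have hV'o : IsOpen V' := isOpen_thickening
  have hKV' : K 0 ⊆ V' := self_subset_thickening hε₂ _
  have hclV'V : closure V' ⊆ V :=
    ((closure_thickening_subset_cthickening _ _).trans hε₂V).trans interior_subset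
  set orb : Set (EuclideanSpace ℝ (Fin n)) :=
    (fun p : EuclideanSpace ℝ (Fin n) × ℝ => φ 0 p.1 p.2) '' (closure V' ×ˢ Ici (0:ℝ))
      with horbdef
  set P := closure orb with hPdef
  have horbU₁ : orb ⊆ U₁ := by
    rintro _ ⟨⟨x, t⟩, ⟨hx, ht⟩, rfl⟩
    exact hVstay x (hclV'V hx) t ht
  have hPN : P ⊆ N :=
    (closure_mono horbU₁).trans (hclU₁N.trans interior_subset)
  have hPc : IsCompact P := hNc.of_isClosed_subset isClosed_closure hPN
  have hV'P : V' ⊆ P := fun x hx =>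
    subset_closure ⟨(x, 0), ⟨subset_closure hx, mem_Ici.2 (le_refl 0)⟩, h00 x⟩
  -- uniform attraction of P into V' under the unperturbed flow
  obtain ⟨V₂, hV₂mem, hV₂stay⟩ := hK0stab V' (hV'o.mem_nhdsSet.2 hKV')
  have hKiV₂ : K 0 ⊆ interior V₂ := subset_interior_iff_mem_nhdsSet.2 hV₂mem
  have henP : ∀ x ∈ P, ∃ s, 0 ≤ s ∧ φ 0 x s ∈ interior V₂ := fun x _ =>
    orbit_meets (huniv0 x).1 ((huniv0 x).2.trans hKiV₂) isOpen_interior 0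
  obtain ⟨T₀, hT₀0, hT₀⟩ := uniform_enter hc0 hPc isOpen_interior henP
  set T₁ := T₀ + 1 with hT₁def
  have hT₁ : 0 < T₁ := by linarith
  have hPattr : ∀ x ∈ P, ∀ t, T₁ ≤ t → φ 0 x t ∈ V' := by
    intro x hx t ht
    obtain ⟨s, hs0, hsT, hsV₂⟩ := hT₀ x hx
    have h1 := hV₂stay _ (interior_subset hsV₂) (t - s) (by linarith)
    rwa [ha0, show s + (t - s) = t by ring] at h1
  -- perturbation estimates
  set Q₂ : Set (EuclideanSpace ℝ (Fin n)) :=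
    (fun p : EuclideanSpace ℝ (Fin n) × ℝ => φ 0 p.1 p.2) '' (P ×ˢ Icc T₁ (2*T₁))
      with hQ₂def
  have hQ₂c : IsCompact Q₂ := (hPc.prod isCompact_Icc).image hc0
  have hQ₂V' : Q₂ ⊆ V' := by
    rintro _ ⟨⟨x, t⟩, ⟨hx, ht⟩, rfl⟩
    exact hPattr x hx t ht.1
  obtain ⟨ε₃, hε₃, hε₃V⟩ := hQ₂c.exists_cthickening_subset_open hV'o hQ₂V'
  obtain ⟨δ₁, hδ₁, hδ₁uc⟩ :=
    param_uniform hφ hPc (by linarith : (0:ℝ) ≤ 2*T₁) hε₃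
  set B := Metric.closedBall (0 : EuclideanSpace ℝ (Fin n)) (L+1) with hBdef
  have hBc : IsCompact B := isCompact_closedBall _ _
  obtain ⟨ε₅, hε₅, hε₅V⟩ := hK0cpt.exists_cthickening_subset_open hV'o hKV'
  set W' := thickening (ε₅/2) (K 0) with hW'def
  have hKW' : K 0 ⊆ W' := self_subset_thickening (by linarith) _
  have henB : ∀ x ∈ B, ∃ s, 0 ≤ s ∧ φ 0 x s ∈ W' := fun x _ =>
    orbit_meets (huniv0 x).1 ((huniv0 x).2.trans hKW') isOpen_thickening 0
  obtain ⟨TB, hTB0, hTB⟩ := uniform_enter hc0 hBc isOpen_thickening henB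
  obtain ⟨δ₂, hδ₂, hδ₂uc⟩ := param_uniform hφ hBc hTB0 (by linarith : (0:ℝ) < ε₅/2)
  -- the final parameter bound
  refine ⟨min (min δN δ₁) (min δ₂ μ),
    lt_min (lt_min hδN hδ₁) (lt_min hδ₂ hμpos),
    (((min_le_right _ _).trans (min_le_right _ _)).trans hμle), ?_⟩
  intro l hl0 hllam0
  have hlδN : l < δN := hllam0.trans_le ((min_le_left _ _).trans (min_le_left _ _))
  have hlδ₁ : l < δ₁ := hllam0.trans_le ((min_le_left _ _).trans (min_le_right _ _))
  have hlδ₂ : l < δ₂ := hllam0.trans_le ((min_le_right _ _).trans (min_le_left _ _))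
  have hlμ : l < μ := hllam0.trans_le ((min_le_right _ _).trans (min_le_right _ _))
  have hllam1 : l ≤ lam1 := (hlμ.trans_le hμle).le
  have hlIcc1 : l ∈ Icc (0:ℝ) 1 := ⟨hl0.le, hllam1.trans hlam1le⟩
  have hlIcclam1 : l ∈ Icc (0:ℝ) lam1 := ⟨hl0.le, hllam1⟩
  obtain ⟨hcl, h0l, hal⟩ := hφ.2 l hlIcc1
  have hNl : IsIsolatingNbhd (φ l) N (K l) :=
    hδNiso l hlIcclam1 (by rw [sub_zero, abs_of_nonneg hl0.le]; exact hlδN)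
  have hAbd : IsBounded (attractionRegion (φ l) (K l)) := hμbd l hl0 hlμ
  have hKlstab : FlowStable (φ l) (K l) := (hattr l ⟨hl0, hllam1⟩).2.2.1
  have hKlcpt : IsCompact (K l) := (hcont.1 l hlIcclam1).1
  -- the trap persists for the perturbed flow
  have hstepl : ∀ x ∈ P, ∀ t, T₁ ≤ t → t ≤ 2*T₁ → φ l x t ∈ V' := by
    intro x hx t ht1 ht2
    have hd := hδ₁uc l hlIcc1 hlδ₁ x hx t ⟨by linarith, ht2⟩
    have hmem : φ 0 x t ∈ Q₂ := ⟨(x, t), ⟨hx, ht1, ht2⟩, rfl⟩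
    exact hε₃V (thickening_subset_cthickening _ _
      (mem_thickening_iff.2 ⟨_, hmem, hd⟩))
  have htrap := forward_trap h0l hal hV'P hT₁ hstepl
  -- the ball B lies in the region of attraction of K l
  have hBA : B ⊆ attractionRegion (φ l) (K l) := by
    intro x hxB
    obtain ⟨s, hs0, hsT, hsW⟩ := hTB x hxB
    have hd := hδ₂uc l hlIcc1 hlδ₂ x hxB s ⟨hs0, hsT⟩
    have hsV' : φ l x s ∈ V' := by
      obtain ⟨z, hz, hdz⟩ := mem_thickening_iff.1 hsW
      refine hε₅V (thickening_subset_cthickening _ _ (mem_thickening_iff.2 ⟨z, hz, ?_⟩))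
      calc dist (φ l x s) z ≤ dist (φ l x s) (φ 0 x s) + dist (φ 0 x s) z :=
            dist_triangle _ _ _
        _ < ε₅ := by linarith
    have htail : ∀ t, s + T₁ ≤ t → φ l x t ∈ P := by
      intro t ht
      have h1 := htrap (φ l x s) (hV'P hsV') (t - s) (by linarith)
      rw [hal, show s + (t - s) = t by ring] at h1
      exact hV'P h1
    obtain ⟨hne, hsub⟩ := omega_nonempty_of_tail hPc htail
    exact ⟨hne, hNl.2.2.2 _ (omega_flowInvariant hcl h0l hal x) (hsub.trans hPN)⟩
  -- properties of the region of attraction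
  have hAo : IsOpen (attractionRegion (φ l) (K l)) :=
    attraction_open hcl h0l hal hKlcpt hKlstab hNl
  have hAinv : FlowInvariant (φ l) (attractionRegion (φ l) (K l)) :=
    attraction_invariant h0l hal (K l)
  obtain ⟨MA, hMA⟩ := hAbd.subset_closedBall 0
  -- the closure of the region of attraction misses the escape region
  have hclAR : ∀ x ∈ closure (attractionRegion (φ l) (K l)), x ∉ escapeRegion φ l := by
    intro x hxcl hxR
    obtain ⟨t₀, ht₀⟩ := (hxR.eventually_ge_atTop (MA + 2)).exists
    have hco : Continuous fun y => φ l y t₀ := flow_contx hcl t₀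
    have hev : (fun y => φ l y t₀) ⁻¹' Metric.ball (φ l x t₀) 1 ∈ 𝓝 x :=
      hco.continuousAt.preimage_mem_nhds (Metric.ball_mem_nhds _ one_pos)
    obtain ⟨a, haball, haA⟩ := mem_closure_iff_nhds.1 hxcl _ hev
    have h1 : φ l a t₀ ∈ attractionRegion (φ l) (K l) :=
      mem_of_flowInvariant hAinv haA t₀
    have h2 : ‖φ l a t₀‖ ≤ MA := mem_closedBall_zero_iff.1 (hMA h1)
    have h3 : dist (φ l a t₀) (φ l x t₀) < 1 := Metric.mem_ball.1 haball
    have h4 : ‖φ l x t₀‖ - ‖φ l a t₀‖ ≤ dist (φ l x t₀) (φ l a t₀) := by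
      rw [dist_eq_norm]; exact norm_sub_norm_le _ _
    rw [dist_comm] at h3
    linarith
  -- every ray from the origin hits the complementary set
  have h0A : (0 : EuclideanSpace ℝ (Fin n)) ∈ attractionRegion (φ l) (K l) :=
    hBA (Metric.mem_closedBall_self (by linarith))
  have hray : ∀ u : EuclideanSpace ℝ (Fin n), ‖u‖ = 1 →
      ∃ t : ℝ, 0 ≤ t ∧ t • u ∈ complementarySet φ K l := by
    intro u hu
    by_contra hcon
    push_neg at hcon
    refine ray_hits hAo hAbd h0A hclAR hu (fun t ht => ?_)
    have h := hcon t ht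
    rw [complementarySet, mem_compl_iff, not_not] at h
    exact h
  have hnpos : 0 < n := by omega
  set e : EuclideanSpace ℝ (Fin n) := EuclideanSpace.single (⟨0, hnpos⟩ : Fin n) (1:ℝ)
    with hedef
  have he : ‖e‖ = 1 := by rw [hedef, EuclideanSpace.norm_single]; simp
  obtain ⟨t₁, ht₁0, ht₁C⟩ := hray e he
  obtain ⟨t₂, ht₂0, ht₂C⟩ := hray (-e) (by rw [norm_neg]; exact he)
  have hCnotA : ∀ z, z ∈ complementarySet φ K l →
      z ∉ attractionRegion (φ l) (K l) := fun z hz hzA => hz (Or.inl hzA)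
  have hn₁ : L + 1 < t₁ := by
    by_contra h
    push_neg at h
    refine hCnotA _ ht₁C (hBA (mem_closedBall_zero_iff.2 ?_))
    rw [norm_smul, he, mul_one, Real.norm_of_nonneg ht₁0]
    exact h
  have hn₂ : L + 1 < t₂ := by
    by_contra h
    push_neg at h
    refine hCnotA _ ht₂C (hBA (mem_closedBall_zero_iff.2 ?_))
    rw [norm_smul, norm_neg, he, mul_one, Real.norm_of_nonneg ht₂0]
    exact h
  have hdist : dist (t₁ • e) (t₂ • (-e)) = t₁ + t₂ := by
    rw [dist_eq_norm, show t₁ • e - t₂ • (-e) = (t₁ + t₂) • e by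
      rw [smul_neg, sub_neg_eq_add, add_smul],
      norm_smul, he, mul_one, Real.norm_of_nonneg (by linarith)]
  calc ENNReal.ofReal L < ENNReal.ofReal (dist (t₁ • e) (t₂ • (-e))) := by
        rw [hdist, ENNReal.ofReal_lt_ofReal_iff (by linarith)]
        linarith
    _ = edist (t₁ • e) (t₂ • (-e)) := (edist_dist _ _).symm
    _ ≤ EMetric.diam (complementarySet φ K l) :=
        EMetric.edist_le_diam_of_mem ht₁C ht₂C
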